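/- Let (Q,q,k) be a regular local ring of embedding dimension e ≥ 3 and J ⊆ q^2 a homogeneous q-primary complete intersection ideal. If the ring Q/J is compressed (Gorenstein), then e = 3 and the h-vector of Q/J is (1,3,3,1). -/

import Mathlib

open MvPolynomial

/-- The ideal generated by the variables (the graded maximal ideal `q`). -/
noncomputable def qIdeal (k : Type*) [Field k] (e : ℕ) : Ideal (MvPolynomial (Fin e) k) :=
  Ideal.span (Set.range X)

/-- The Hilbert function of `Q/J`: `h(i) = dim_k (q^i + J)/(q^{i+1} + J)`. -/
noncomputable def hilb (k : Type*) [Field k] (e : ℕ)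
    (J : Ideal (MvPolynomial (Fin e) k)) (i : ℕ) : ℕ :=
  Module.finrank k
    (((qIdeal k e ^ i ⊔ J).map (Ideal.Quotient.mk (qIdeal k e ^ (i + 1) ⊔ J))).restrictScalars k)

/-- An ideal is homogeneous if it is generated by homogeneous polynomials. -/
def IsHomogeneousIdeal (k : Type*) [Field k] (e : ℕ)
    (J : Ideal (MvPolynomial (Fin e) k)) : Prop :=
  ∃ S : Set (MvPolynomial (Fin e) k),
    (∀ p ∈ S, ∃ n, MvPolynomial.IsHomogeneous p n) ∧ J = Ideal.span S

/-- Hilbert function of the ambient ring: `h_Q(i) = binom(e−1+i, e−1)`. -/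
def hQ (e i : ℕ) : ℕ := Nat.choose (e - 1 + i) (e - 1)

-- Auxiliary lemmas
section helpers
variable {k : Type*} [Field k] {e : ℕ}

lemma Finsupp.degree_add' (a b : Fin e →₀ ℕ) : (a + b).degree = a.degree + b.degree := by
  simp only [Finsupp.degree_eq_weight_one, map_add]

lemma Finsupp.degree_single' (j : Fin e) (c : ℕ) : (Finsupp.single j c).degree = c := by
  simp only [Finsupp.degree_eq_weight_one]
  rw [Finsupp.weight_apply, Finsupp.sum_single_index] <;> simp

lemma qpow_eq_span (i : ℕ) :
    (qIdeal k e) ^ i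
      = Ideal.span ((fun m => monomial m (1 : k)) '' {m : Fin e →₀ ℕ | i ≤ m.degree}) := by
  induction i with
  | zero =>
    rw [pow_zero, eq_comm, Ideal.one_eq_top, Ideal.eq_top_iff_one]
    exact Ideal.subset_span ⟨0, by simp, by simp⟩
  | succ n ih =>
    rw [pow_succ, ih]
    have hq : qIdeal k e
        = Ideal.span ((fun m => monomial m (1 : k)) '' {m : Fin e →₀ ℕ | 1 ≤ m.degree}) := by
      apply le_antisymm
      · rw [qIdeal, Ideal.span_le]
        rintro _ ⟨j, rfl⟩
        exact Ideal.subset_span ⟨Finsupp.single j 1, by simp [Finsupp.degree_single'], rfl⟩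
      · rw [Ideal.span_le]
        rintro _ ⟨m, hm, rfl⟩
        have hm0 : m ≠ 0 := by
          intro h; rw [h] at hm; simp at hm
        obtain ⟨j, hj⟩ : ∃ j, m j ≠ 0 := by
          by_contra h; push_neg at h; exact hm0 (Finsupp.ext fun j => h j)
        have hle : Finsupp.single j 1 ≤ m := Finsupp.single_le_iff.2 (by omega)
        show monomial m (1:k) ∈ _
        have : (monomial m (1 : k)) = X j * monomial (m - Finsupp.single j 1) 1 := by
          rw [X, monomial_mul, one_mul, add_tsub_cancel_of_le hle]
        rw [this]
        exact Ideal.mul_mem_right _ _ (Ideal.subset_span ⟨j, rfl⟩)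
    rw [hq, Ideal.span_mul_span']
    apply le_antisymm
    · rw [Ideal.span_le]
      intro z hz
      rw [Set.mem_mul] at hz
      obtain ⟨p, hp, q, hq2, rfl⟩ := hz
      obtain ⟨a, ha, rfl⟩ := hp
      obtain ⟨b, hb, rfl⟩ := hq2
      refine Ideal.subset_span ⟨a + b, ?_, by rw [monomial_mul, one_mul]⟩
      simp only [Set.mem_setOf_eq] at ha hb ⊢
      rw [Finsupp.degree_add']
      omega
    · rw [Ideal.span_le]
      rintro _ ⟨m, hm, rfl⟩
      simp only [Set.mem_setOf_eq] at hm
      have hm0 : m ≠ 0 := by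
        intro h; rw [h] at hm; simp at hm
      obtain ⟨j, hj⟩ : ∃ j, m j ≠ 0 := by
        by_contra h; push_neg at h; exact hm0 (Finsupp.ext fun j => h j)
      have hle : Finsupp.single j 1 ≤ m := Finsupp.single_le_iff.2 (by omega)
      have hsplit : m = (m - Finsupp.single j 1) + Finsupp.single j 1 :=
        (tsub_add_cancel_of_le hle).symm
      have hdeg : (m - Finsupp.single j 1).degree + 1 = m.degree := by
        conv_rhs => rw [hsplit]
        rw [Finsupp.degree_add', Finsupp.degree_single']
      show monomial m (1:k) ∈ _
      have : (monomial m (1 : k)) = monomial (m - Finsupp.single j 1) 1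
          * monomial (Finsupp.single j 1) 1 := by
        rw [monomial_mul, one_mul, ← hsplit]
      rw [this]
      refine Ideal.subset_span (Set.mul_mem_mul ⟨_, ?_, rfl⟩
        ⟨_, by simp [Finsupp.degree_single'], rfl⟩)
      simp only [Set.mem_setOf_eq]
      omega

lemma mem_qpow_iff {x : MvPolynomial (Fin e) k} {i : ℕ} :
    x ∈ (qIdeal k e) ^ i ↔ ∀ m ∈ x.support, i ≤ m.degree := by
  rw [qpow_eq_span, mem_ideal_span_monomial_image]
  constructor
  · intro h m hm
    obtain ⟨s, hs, hsm⟩ := h m hm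
    calc i ≤ s.degree := hs
    _ ≤ m.degree := by
      obtain ⟨c, rfl⟩ := le_iff_exists_add.1 hsm
      rw [Finsupp.degree_add']; omega
  · intro h m hm
    exact ⟨m, h m hm, le_rfl⟩

end helpers

section helpers2
variable {k : Type*} [Field k] {e : ℕ}

lemma coeff_eq_zero_of_mem_qpow {x : MvPolynomial (Fin e) k} {i : ℕ}
    (hx : x ∈ (qIdeal k e) ^ i) {m : Fin e →₀ ℕ} (hm : m.degree < i) :
    coeff m x = 0 := by
  by_contra h
  exact absurd (mem_qpow_iff.1 hx m (mem_support_iff.2 h)) (by omega)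

lemma homogeneousComponent_eq_zero_of_mem_qpow {x : MvPolynomial (Fin e) k} {i d : ℕ}
    (hx : x ∈ (qIdeal k e) ^ i) (hd : d < i) :
    homogeneousComponent d x = 0 := by
  ext m
  rw [coeff_homogeneousComponent, coeff_zero]
  split_ifs with h
  · exact coeff_eq_zero_of_mem_qpow hx (by omega)
  · rfl

lemma mem_qpow_of_homog {p : MvPolynomial (Fin e) k} {i : ℕ}
    (hp : p ∈ homogeneousSubmodule (Fin e) k i) : p ∈ (qIdeal k e) ^ i := by
  rw [mem_qpow_iff]
  intro m hm
  rw [mem_homogeneousSubmodule] at hp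
  have := hp (mem_support_iff.1 hm)
  rw [Finsupp.degree_eq_weight_one]
  exact this.symm.le

lemma sub_homogeneousComponent_mem {x : MvPolynomial (Fin e) k} {i : ℕ}
    (hx : x ∈ (qIdeal k e) ^ i) :
    x - homogeneousComponent i x ∈ (qIdeal k e) ^ (i + 1) := by
  rw [mem_qpow_iff]
  intro m hm
  rw [mem_support_iff, coeff_sub, coeff_homogeneousComponent] at hm
  by_contra h
  push_neg at h
  rcases lt_or_eq_of_le (Nat.lt_succ_iff.1 h) with h' | h'
  · rw [if_neg (by omega), coeff_eq_zero_of_mem_qpow hx h', sub_zero] at hm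
    exact hm rfl
  · rw [if_pos h', sub_self] at hm
    exact hm rfl

end helpers2

section dim
variable {k : Type*} [Field k] {e : ℕ}

lemma Finsupp.degree_eq_sum_id (f : Fin e →₀ ℕ) : (f.sum fun _ => id) = f.degree := by
  simp [Finsupp.degree, Finsupp.sum]
  rfl

/-- Monomials of degree `n` correspond to multisets of size `n`. -/
noncomputable def degreeSetEquiv (e n : ℕ) :
    ↥{m : Fin e →₀ ℕ | m.degree = n} ≃ Sym (Fin e) n where
  toFun m := ⟨Finsupp.toMultiset m.1, by
    rw [Finsupp.card_toMultiset]
    have h2 := m.2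
    simp only [Set.mem_setOf_eq] at h2
    rw [Finsupp.degree_eq_sum_id]
    exact h2⟩
  invFun s := ⟨Multiset.toFinsupp s.1, by
    have : Multiset.card (Finsupp.toMultiset (Multiset.toFinsupp s.1)) = n := by
      rw [Multiset.toFinsupp_toMultiset]; exact s.2
    rw [Finsupp.card_toMultiset] at this
    rw [Finsupp.degree_eq_sum_id] at this
    exact this⟩
  left_inv m := by ext : 1; simp
  right_inv s := by ext : 1; simp [Multiset.toFinsupp_toMultiset]

noncomputable instance (e n : ℕ) : Fintype ↥{m : Fin e →₀ ℕ | m.degree = n} :=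
  Fintype.ofEquiv _ (degreeSetEquiv e n).symm

lemma card_degreeSet (e n : ℕ) :
    Fintype.card ↥{m : Fin e →₀ ℕ | m.degree = n} = (e + n - 1).choose n := by
  rw [Fintype.card_congr (degreeSetEquiv e n), Sym.card_sym_eq_choose, Fintype.card_fin]

/-- The homogeneous component as a space of finitely supported functions. -/
noncomputable def homogEquiv (k : Type*) [Field k] (e n : ℕ) :
    homogeneousSubmodule (Fin e) k n ≃ₗ[k] (↥{m : Fin e →₀ ℕ | m.degree = n} →₀ k) :=
  (LinearEquiv.ofEq _ _ (homogeneousSubmodule_eq_finsupp_supported (Fin e) k n)) ≪≫ₗ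
    AddMonoidAlgebra.supportedEquivFinsupp _

instance (n : ℕ) : FiniteDimensional k (homogeneousSubmodule (Fin e) k n) :=
  Module.Finite.equiv (homogEquiv k e n).symm

lemma finrank_homog (k : Type*) [Field k] (e n : ℕ) :
    Module.finrank k (homogeneousSubmodule (Fin e) k n) = (e + n - 1).choose n := by
  rw [(homogEquiv k e n).finrank_eq, Module.finrank_finsupp_self, card_degreeSet e n]

end dim

section prod
variable {k : Type*} [Field k] {e : ℕ}

lemma coeff_eq_zero_of_comp_zero {g : MvPolynomial (Fin e) k} {m : Fin e →₀ ℕ}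
    (h : homogeneousComponent m.degree g = 0) : coeff m g = 0 := by
  have := congrArg (coeff m) h
  rwa [coeff_homogeneousComponent, if_pos rfl, coeff_zero] at this

lemma comp_mul_homog (r g : MvPolynomial (Fin e) k) {d : ℕ}
    (hg : g.IsHomogeneous d) (n : ℕ) (hdn : d ≤ n) :
    homogeneousComponent n (r * g) = homogeneousComponent (n - d) r * g := by
  ext m
  rw [coeff_homogeneousComponent, coeff_mul, coeff_mul]
  split_ifs with hm
  · refine Finset.sum_congr rfl fun x hx => ?_
    rw [Finset.HasAntidiagonal.mem_antidiagonal] at hx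
    by_cases hg2 : coeff x.2 g = 0
    · rw [hg2, mul_zero, mul_zero]
    · have hd2 : x.2.degree = d := by
        rw [Finsupp.degree_eq_weight_one]; exact hg hg2
      have : x.1.degree = n - d := by
        have := Finsupp.degree_add' x.1 x.2
        rw [hx, hm, hd2] at this
        omega
      rw [coeff_homogeneousComponent, if_pos this]
  · symm
    refine Finset.sum_eq_zero fun x hx => ?_
    rw [Finset.HasAntidiagonal.mem_antidiagonal] at hx
    by_cases hg2 : coeff x.2 g = 0
    · rw [hg2, mul_zero]
    · have hd2 : x.2.degree = d := by
        rw [Finsupp.degree_eq_weight_one]; exact hg hg2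
      rw [coeff_homogeneousComponent, if_neg, zero_mul]
      intro h1
      apply hm
      have := Finsupp.degree_add' x.1 x.2
      rw [hx, h1, hd2] at this
      omega

lemma comp_mul_homog_zero (r g : MvPolynomial (Fin e) k) {d : ℕ}
    (hg : g.IsHomogeneous d) (n : ℕ) (hdn : n < d) :
    homogeneousComponent n (r * g) = 0 := by
  ext m
  rw [coeff_homogeneousComponent, coeff_zero]
  split_ifs with hm
  · rw [coeff_mul]
    refine Finset.sum_eq_zero fun x hx => ?_
    rw [Finset.HasAntidiagonal.mem_antidiagonal] at hx
    by_cases hg2 : coeff x.2 g = 0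
    · rw [hg2, mul_zero]
    · have hd2 : x.2.degree = d := by
        rw [Finsupp.degree_eq_weight_one]; exact hg hg2
      have := Finsupp.degree_add' x.1 x.2
      rw [hx, hm, hd2] at this
      omega
  · rfl

lemma comp_mul_lowvanish (r g : MvPolynomial (Fin e) k) (t : ℕ)
    (hg : ∀ d < t, homogeneousComponent d g = 0) :
    homogeneousComponent t (r * g) = coeff 0 r • homogeneousComponent t g := by
  ext m
  rw [coeff_smul, coeff_homogeneousComponent, coeff_homogeneousComponent]
  split_ifs with hm
  · rw [coeff_mul]
    rw [Finset.sum_eq_single ((0 : Fin e →₀ ℕ), m)]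
    · rfl
    · intro x hx hne
      rw [Finset.HasAntidiagonal.mem_antidiagonal] at hx
      by_cases hg2 : coeff x.2 g = 0
      · rw [hg2, mul_zero]
      · have hd2 : ¬ x.2.degree < t := fun hlt =>
          hg2 (coeff_eq_zero_of_comp_zero (hg _ hlt))
        have hadd := Finsupp.degree_add' x.1 x.2
        rw [hx, hm] at hadd
        have h1 : x.1.degree = 0 := by omega
        have h10 : x.1 = 0 := (Finsupp.degree_eq_zero_iff _).1 h1
        exact absurd (Prod.ext h10 (by rw [h10, zero_add] at hx; exact hx)) hne
    · intro h
      exact absurd (Finset.HasAntidiagonal.mem_antidiagonal.2 (zero_add m)) h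
  · rw [smul_zero]

end prod

section core
variable {k : Type*} [Field k] {e : ℕ} {J : Ideal (MvPolynomial (Fin e) k)}

lemma comp_mem_of_span {S : Set (MvPolynomial (Fin e) k)}
    (hS : ∀ p ∈ S, ∃ n, p.IsHomogeneous n) (hJ : J = Ideal.span S) :
    ∀ x ∈ J, ∀ n, homogeneousComponent n x ∈ J := by
  intro x hx n
  rw [hJ, Ideal.span] at hx
  obtain ⟨c, f, g, hsum⟩ := Submodule.mem_span_set'.1 hx
  rw [← hsum, map_sum]
  refine Ideal.sum_mem _ fun i _ => ?_
  obtain ⟨d, hd⟩ := hS (g i).1 (g i).2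
  rw [smul_eq_mul]
  rcases le_or_gt d n with h | h
  · rw [comp_mul_homog _ _ hd n h]
    exact Ideal.mul_mem_left _ _ (hJ ▸ Ideal.subset_span (g i).2)
  · rw [comp_mul_homog_zero _ _ hd n h]
    exact Ideal.zero_mem _

lemma comp_mem_span_image {S : Set (MvPolynomial (Fin e) k)} (hJ : J = Ideal.span S) (t : ℕ)
    (hvan : ∀ x ∈ J, ∀ d, d < t → homogeneousComponent d x = 0) :
    ∀ x ∈ J, homogeneousComponent t x ∈
      Submodule.span k (homogeneousComponent t '' S) := by
  intro x hx
  rw [hJ, Ideal.span] at hx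
  obtain ⟨c, f, g, hsum⟩ := Submodule.mem_span_set'.1 hx
  rw [← hsum, map_sum]
  refine Submodule.sum_mem _ fun i _ => ?_
  rw [smul_eq_mul, comp_mul_lowvanish _ _ t
    (fun d hd => hvan (g i).1 (hJ ▸ Ideal.subset_span (g i).2) d hd)]
  exact Submodule.smul_mem _ _ (Submodule.subset_span ⟨(g i).1, (g i).2, rfl⟩)

set_option synthInstance.maxHeartbeats 1000000 in
set_option maxHeartbeats 1600000 in
lemma hilb_add_finrank
    (hJcomp : ∀ x ∈ J, ∀ n, homogeneousComponent n x ∈ J) (i : ℕ) :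
    hilb k e J i +
      Module.finrank k
        ↥(Submodule.restrictScalars k J ⊓ homogeneousSubmodule (Fin e) k i)
      = (e + i - 1).choose i := by
  classical
  set I : Ideal (MvPolynomial (Fin e) k) := qIdeal k e ^ (i + 1) ⊔ J with hI
  let φ : homogeneousSubmodule (Fin e) k i →ₗ[k] (MvPolynomial (Fin e) k ⧸ I) :=
    (Ideal.Quotient.mkₐ k I).toLinearMap ∘ₗ (homogeneousSubmodule (Fin e) k i).subtype
  have hrange : LinearMap.range φ
      = Submodule.restrictScalars k ((qIdeal k e ^ i ⊔ J).map (Ideal.Quotient.mk I)) := by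
    apply le_antisymm
    · rintro _ ⟨p, rfl⟩
      show Ideal.Quotient.mkₐ k I p.1 ∈ _
      rw [Ideal.Quotient.mkₐ_eq_mk]
      exact Ideal.mem_map_of_mem _ (Ideal.mem_sup_left (mem_qpow_of_homog p.2))
    · intro y hy
      have hy' : y ∈ (qIdeal k e ^ i ⊔ J).map (Ideal.Quotient.mk I) := hy
      rw [Ideal.mem_map_iff_of_surjective _ Ideal.Quotient.mk_surjective] at hy'
      obtain ⟨x, hx, rfl⟩ := hy'
      obtain ⟨a, ha, b, hb, rfl⟩ := Submodule.mem_sup.1 hx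
      refine ⟨⟨homogeneousComponent i a, homogeneousComponent_mem i a⟩, ?_⟩
      show Ideal.Quotient.mkₐ k I _ = _
      rw [Ideal.Quotient.mkₐ_eq_mk, Ideal.Quotient.eq]
      have h1 : a - homogeneousComponent i a ∈ I :=
        Ideal.mem_sup_left (sub_homogeneousComponent_mem ha)
      have h2 : b ∈ I := Ideal.mem_sup_right hb
      have : homogeneousComponent i a - (a + b) = -((a - homogeneousComponent i a) + b) := by
        ring
      show homogeneousComponent i a - (a + b) ∈ I
      rw [this]
      exact neg_mem (add_mem h1 h2)
  have hker : LinearMap.ker φ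
      = Submodule.comap (homogeneousSubmodule (Fin e) k i).subtype
          (Submodule.restrictScalars k J ⊓ homogeneousSubmodule (Fin e) k i) := by
    ext p
    simp only [LinearMap.mem_ker, Submodule.mem_comap, Submodule.mem_inf,
      Submodule.restrictScalars_mem, Submodule.coe_subtype]
    constructor
    · intro hp
      refine ⟨?_, p.2⟩
      have hp' : (p : MvPolynomial (Fin e) k) ∈ I := by
        rw [← Ideal.Quotient.eq_zero_iff_mem]
        exact hp
      obtain ⟨a, ha, b, hb, hab⟩ := Submodule.mem_sup.1 hp'
      have hpa : homogeneousComponent i (p : MvPolynomial (Fin e) k)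
          = (p : MvPolynomial (Fin e) k) := by
        have := homogeneousComponent_of_mem (m := i) p.2
        simpa using this
      have : (p : MvPolynomial (Fin e) k) = homogeneousComponent i b := by
        rw [← hpa, ← hab, map_add,
          homogeneousComponent_eq_zero_of_mem_qpow ha (Nat.lt_succ_self i), zero_add]
      rw [this]
      exact hJcomp b hb i
    · intro hp
      show Ideal.Quotient.mkₐ k I _ = 0
      rw [Ideal.Quotient.mkₐ_eq_mk, Ideal.Quotient.eq_zero_iff_mem]
      exact Ideal.mem_sup_right hp.1
  have hrn := LinearMap.finrank_range_add_finrank_ker φ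
  rw [hrange, hker] at hrn
  rw [finrank_homog k e i] at hrn
  have hck : Module.finrank k
      ↥(Submodule.comap (homogeneousSubmodule (Fin e) k i).subtype
          (Submodule.restrictScalars k J ⊓ homogeneousSubmodule (Fin e) k i))
      = Module.finrank k
        ↥(Submodule.restrictScalars k J ⊓ homogeneousSubmodule (Fin e) k i) :=
    (Submodule.comapSubtypeEquivOfLe inf_le_right).finrank_eq
  rw [hck] at hrn
  exact hrn

end core

section endgame
variable {k : Type*} [Field k] {e : ℕ} {J : Ideal (MvPolynomial (Fin e) k)}

lemma hQ_eq (he : 1 ≤ e) (i : ℕ) : hQ e i = (e + i - 1).choose i := by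
  rw [hQ]
  have h1 : e - 1 + i = e + i - 1 := by omega
  have h2 : e - 1 = (e + i - 1) - i := by omega
  rw [h1, h2, Nat.choose_symm (by omega)]

lemma comp_eq_zero_of_full
    (hJcomp : ∀ x ∈ J, ∀ n, homogeneousComponent n x ∈ J) {i : ℕ}
    (hfull : hilb k e J i = (e + i - 1).choose i) :
    ∀ x ∈ J, homogeneousComponent i x = 0 := by
  have h := hilb_add_finrank hJcomp i
  rw [hfull] at h
  haveI : FiniteDimensional k
      ↥(Submodule.restrictScalars k J ⊓ homogeneousSubmodule (Fin e) k i) :=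
    Submodule.finiteDimensional_of_le inf_le_right
  have h0 : Submodule.restrictScalars k J ⊓ homogeneousSubmodule (Fin e) k i = ⊥ :=
    Submodule.finrank_eq_zero.1 (by omega)
  intro x hx
  have hmem : homogeneousComponent i x
      ∈ Submodule.restrictScalars k J ⊓ homogeneousSubmodule (Fin e) k i :=
    ⟨hJcomp x hx i, homogeneousComponent_mem i x⟩
  rw [h0] at hmem
  exact hmem

lemma finrank_Jinf_le_length (L : List (MvPolynomial (Fin e) k))
    (hJ : J = Ideal.span {x | x ∈ L}) (t : ℕ)
    (hvan : ∀ x ∈ J, ∀ d, d < t → homogeneousComponent d x = 0) :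
    Module.finrank k
      ↥(Submodule.restrictScalars k J ⊓ homogeneousSubmodule (Fin e) k t)
      ≤ L.length := by
  classical
  have himg : homogeneousComponent t '' {x | x ∈ L}
      = ↑(L.map (homogeneousComponent t)).toFinset := by
    ext y
    simp [List.mem_map, eq_comm]
  have hsub : (Submodule.restrictScalars k J ⊓ homogeneousSubmodule (Fin e) k t)
      ≤ Submodule.span k ↑(L.map (homogeneousComponent t)).toFinset := by
    rintro x ⟨hxJ, hxh⟩
    have hx := comp_mem_span_image hJ t hvan x hxJ
    rw [himg] at hx
    rwa [show homogeneousComponent t x = x by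
      simpa using homogeneousComponent_of_mem (m := t) hxh] at hx
  have s1 : Module.finrank k
      ↥(Submodule.restrictScalars k J ⊓ homogeneousSubmodule (Fin e) k t)
      ≤ Module.finrank k
        ↥(Submodule.span k ((L.map (homogeneousComponent t)).toFinset
          : Set (MvPolynomial (Fin e) k))) :=
    Submodule.finrank_mono hsub
  have s2 : Module.finrank k
      ↥(Submodule.span k ((L.map (homogeneousComponent t)).toFinset
        : Set (MvPolynomial (Fin e) k)))
      ≤ (L.map (homogeneousComponent t)).toFinset.card := by
    have := finrank_span_finset_le_card (R := k) ((L.map (homogeneousComponent t)).toFinset)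
    simpa [Set.finrank] using this
  have s3 : (L.map (homogeneousComponent t)).toFinset.card
      ≤ (L.map (homogeneousComponent t)).length := List.toFinset_card_le _
  have s4 : (L.map (homogeneousComponent t)).length = L.length := List.length_map _
  omega

lemma aux_choose2 (n : ℕ) : n + 5 ≤ (n + 4).choose 2 := by
  induction n with
  | zero => decide
  | succ m ih =>
    have h : (m + 5).choose 2 = (m + 4).choose 1 + (m + 4).choose 2 :=
      Nat.choose_succ_succ (m + 4) 1
    rw [show m + 1 + 4 = m + 5 by omega, h, Nat.choose_one_right]
    omega

lemma arith {e s : ℕ} (he : 3 ≤ e) (hs : 2 ≤ s)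
    (h : hQ e (s/2+1) ≤ hQ e (s - (s/2+1)) + e) : e = 3 ∧ s = 3 := by
  obtain ⟨e', rfl⟩ : ∃ e', e = e' + 3 := ⟨e - 3, by omega⟩
  have hQ3 : ∀ i, hQ (e'+3) i = (e'+2+i).choose (e'+2) := by
    intro i
    rw [hQ]
    congr 1 <;> omega
  set t := s/2 + 1 with htdef
  have ht2 : 2 ≤ t := by omega
  have ha : s - t ≤ t - 1 := by omega
  have h2 : hQ (e'+3) t ≤ hQ (e'+3) (t-1) + (e'+3) := by
    refine le_trans h ?_
    have : hQ (e'+3) (s - t) ≤ hQ (e'+3) (t-1) := by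
      rw [hQ3, hQ3]
      exact Nat.choose_le_choose _ (by omega)
    omega
  obtain ⟨t', htt⟩ : ∃ t', t = t' + 2 := ⟨t - 2, by omega⟩
  rw [htt] at h2
  rw [hQ3, hQ3] at h2
  have hpas : (e'+2+(t'+2)).choose (e'+2)
      = (e'+t'+3).choose (e'+1) + (e'+t'+3).choose (e'+2) := by
    rw [show e'+2+(t'+2) = (e'+t'+3)+1 by omega]
    exact Nat.choose_succ_succ (e'+t'+3) (e'+1)
  rw [hpas, show t'+2-1 = t'+1 by omega, show e'+2+(t'+1) = e'+t'+3 by omega] at h2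
  have hkey : (e'+t'+3).choose (e'+1) ≤ e' + 3 := by omega
  have he0 : e' = 0 := by
    by_contra he0
    have h4 : (e'+3).choose (e'+1) ≤ (e'+t'+3).choose (e'+1) :=
      Nat.choose_le_choose _ (by omega)
    have h5 : (e'+3).choose (e'+1) = (e'+3).choose 2 := by
      rw [show e'+1 = (e'+3) - 2 by omega]
      exact Nat.choose_symm (by omega)
    have h6 := aux_choose2 (e'-1)
    rw [show e'-1+4 = e'+3 by omega] at h6
    omega
  subst he0
  simp only [Nat.choose_one_right, zero_add] at hkey
  have ht' : t' = 0 := by omega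
  rw [htt, ht'] at htdef
  have hs23 : s = 2 ∨ s = 3 := by omega
  rcases hs23 with rfl | rfl
  · exfalso
    rw [htt, ht'] at h
    rw [hQ3, hQ3] at h
    norm_num [Nat.choose] at h
  · exact ⟨rfl, rfl⟩

end endgame

/-- Let `Q` be the (power series, equivalently polynomial)
`k`-algebra in `e ≥ 3` variables and `J ⊆ q^2` a homogeneous `q`-primary
complete intersection ideal.  If `Q/J` is compressed (Gorenstein), then `e = 3`
and the h-vector of `Q/J` is `(1,3,3,1)`. -/
theorem stmt9 (k : Type*) [Field k] (e : ℕ) (he : 3 ≤ e)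
    (J : Ideal (MvPolynomial (Fin e) k))
    (hhom : IsHomogeneousIdeal k e J)
    (hp : J.IsPrimary) (hr : J.radical = qIdeal k e)
    (hq2 : J ≤ qIdeal k e ^ 2)
    -- `J` is a complete intersection: generated by a regular sequence of `e` elements
    (hci : ∃ L : List (MvPolynomial (Fin e) k), L.length = e ∧
      RingTheory.Sequence.IsRegular (MvPolynomial (Fin e) k) L ∧
      J = Ideal.span {x | x ∈ L})
    (s : ℕ)
    -- `s` is the socle degree of `Q/J`
    (hsoc : ¬ qIdeal k e ^ s ≤ J ∧ qIdeal k e ^ (s + 1) ≤ J)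
    -- `Q/J` is compressed Gorenstein
    (hcomp : ∀ i : ℕ, hilb k e J i = min (hQ e i) (if i ≤ s then hQ e (s - i) else 0)) :
    e = 3 ∧ hilb k e J 0 = 1 ∧ hilb k e J 1 = 3 ∧ hilb k e J 2 = 3 ∧
      hilb k e J 3 = 1 ∧ ∀ i : ℕ, 4 ≤ i → hilb k e J i = 0 := by
  obtain ⟨L, hLlen, _, hJL⟩ := hci
  obtain ⟨S, hS, hJS⟩ := hhom
  have hJcomp := comp_mem_of_span hS hJS
  -- Step 1 : s ≥ 2
  have hs2 : 2 ≤ s := by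
    by_contra hlt
    push_neg at hlt
    -- hilb 1 = e since J ⊆ q², yet hcomp forces hilb 1 ≤ 1.
    have hbot : Submodule.restrictScalars k J ⊓ homogeneousSubmodule (Fin e) k 1 = ⊥ := by
      rw [eq_bot_iff]
      rintro x ⟨hxJ, hxh⟩
      have hc : homogeneousComponent 1 x = x := by
        simpa using homogeneousComponent_of_mem (m := 1) hxh
      have hz : homogeneousComponent 1 x = 0 :=
        homogeneousComponent_eq_zero_of_mem_qpow (hq2 hxJ) (by omega)
      rw [hc] at hz
      simp [hz]
    have h1 := hilb_add_finrank hJcomp 1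
    rw [hbot] at h1
    have hfr : Module.finrank k (⊥ : Submodule k (MvPolynomial (Fin e) k)) = 0 :=
      finrank_bot k _
    have he1 : (e + 1 - 1).choose 1 = e := by
      rw [show e + 1 - 1 = e by omega, Nat.choose_one_right]
    have hc := hcomp 1
    interval_cases s
    · rw [if_neg (by omega)] at hc
      simp only [Nat.min_zero] at hc
      omega
    · rw [if_pos (by omega)] at hc
      have : hQ e 1 = e := by rw [hQ_eq (by omega) 1, he1]
      have h0 : hQ e 0 = 1 := by
        rw [hQ_eq (by omega) 0]
        simp
      rw [this, h0] at hc
      have : min e 1 = 1 := by omega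
      rw [this] at hc
      omega
  -- Step 2 : all components of J below t = s/2 + 1 vanish
  set t := s / 2 + 1 with htdef
  have hvan : ∀ x ∈ J, ∀ d, d < t → homogeneousComponent d x = 0 := by
    intro x hx d hd
    refine comp_eq_zero_of_full hJcomp ?_ x hx
    have hds : e - 1 + d ≤ e - 1 + (s - d) := by omega
    have hmin : min (hQ e d) (hQ e (s - d)) = hQ e d :=
      min_eq_left (Nat.choose_le_choose _ hds)
    have hc := hcomp d
    rw [if_pos (by omega), hmin] at hc
    rw [hc, hQ_eq (by omega)]
  -- Step 3 : dimension bound at degree t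
  have hJt := hilb_add_finrank hJcomp t
  have hbound := finrank_Jinf_le_length L hJL t hvan
  rw [hLlen] at hbound
  have hct := hcomp t
  have hts : t ≤ s := by omega
  have hmin : min (hQ e t) (hQ e (s - t)) = hQ e (s - t) :=
    min_eq_right (Nat.choose_le_choose _ (by omega))
  rw [if_pos hts, hmin] at hct
  have hkey : hQ e t ≤ hQ e (s - t) + e := by
    rw [← hQ_eq (by omega)] at hJt
    omega
  obtain ⟨he3, hs3⟩ := arith he hs2 hkey
  subst hs3
  subst he3
  refine ⟨rfl, ?_, ?_, ?_, ?_, ?_⟩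
  · rw [hcomp 0]; decide
  · rw [hcomp 1]; decide
  · rw [hcomp 2]; decide
  · rw [hcomp 3]; decide
  · intro i hi
    rw [hcomp i, if_neg (by omega)]
    simp
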